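/- arXiv:1912.12812 — 8 statements merged into one kernel-verified Lean document; each statement's English description precedes it below -/
import Mathlib

section
/- Suppose τ is invertible. Let J be the sub-bimodule of A⊗A generated by elements 1⊗τ(a) − σ(a)⊗1, let δ_L(a) = 1⊗τ(a) − σ(a)⊗1, and for a (σ,τ)-derivation D : A → M let f_L : J → M be the restriction of the map x⊗y ↦ x·D(τ⁻¹(y)). Then D = f_L ∘ δ_L. -/
open TensorProduct MulOpposite

/-- Suppose `τ` is invertible, with inverse `τinv`.  For a `(σ,τ)`-derivation
`D : A → M` there is a (unique, being determined on generators) left `A`-linear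
map `f_L` on `A ⊗[R] A`, `x ⊗ y ↦ x • D (τ⁻¹ y)`, whose restriction to the
sub-bimodule generated by the elements `δ_L a = 1 ⊗ τ a − σ a ⊗ 1` satisfies
`D = f_L ∘ δ_L`. -/
theorem universal_property_tau_invertible
    (R : Type*) [CommRing R] (A : Type*) [CommRing A] [Algebra R A]
    (M : Type*) [AddCommGroup M] [Module R M]
    [Module A M] [Module Aᵐᵒᵖ M] [SMulCommClass A Aᵐᵒᵖ M]
    [IsScalarTower R A M] [IsScalarTower R Aᵐᵒᵖ M]
    (σ τ : A →ₐ[R] A) (τinv : A → A)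
    (hinv₁ : Function.LeftInverse τinv ⇑τ)
    (hinv₂ : Function.RightInverse τinv ⇑τ)
    (D : A →ₗ[R] M)
    (hD : ∀ a b : A, D (a * b) = op (τ b) • D a + σ a • D b) :
    ∃ fL : A ⊗[R] A →ₗ[R] M,
      (∀ x y : A, fL (x ⊗ₜ[R] y) = x • D (τinv y)) ∧
      (∀ a : A, fL (1 ⊗ₜ[R] τ a - σ a ⊗ₜ[R] 1) = D a) := by

  have hadd : ∀ y z : A, τinv (y + z) = τinv y + τinv z := by
    intro y z
    apply hinv₁.injective
    rw [map_add, hinv₂, hinv₂, hinv₂]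
  have hsmul : ∀ (r : R) (y : A), τinv (r • y) = r • τinv y := by
    intro r y
    apply hinv₁.injective
    rw [map_smul, hinv₂, hinv₂]
  set L : A →ₗ[R] M :=
    { toFun := fun y => D (τinv y)
      map_add' := fun y z => by show D (τinv (y+z)) = _; rw [hadd, map_add]
      map_smul' := fun r y => by show D (τinv (r•y)) = _; rw [hsmul, map_smul]; rfl } with hL
  set B : A →ₗ[R] A →ₗ[R] M :=
    { toFun := fun x =>
        { toFun := fun y => x • L y
          map_add' := fun y z => by show x • L (y+z) = _; rw [map_add, smul_add]
          map_smul' := fun r y => by show x • L (r•y) = _; rw [map_smul, smul_comm]; rfl }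
      map_add' := fun x z => by ext y; simp [add_smul]
      map_smul' := fun r x => by ext y; simp [smul_assoc] } with hB
  refine ⟨TensorProduct.lift B, fun x y => rfl, fun a => ?_⟩
  have hD1 : D 1 = 0 := by
    have := hD 1 1
    simp only [mul_one, map_one, op_one, one_smul] at this
    exact right_eq_add.mp this
  have hτ1 : τinv 1 = 1 := by
    have := hinv₁ 1
    rwa [map_one] at this
  rw [map_sub]
  show (1 : A) • D (τinv (τ a)) - σ a • D (τinv 1) = D a
  rw [hinv₁, hτ1, hD1, smul_zero, sub_zero, one_smul]
end

section
/- Suppose σ is invertible. Let δ_R(a) = 1⊗τ(a) − σ(a)⊗1 in A⊗A, and for a (σ,τ)-derivation D : A → M let f_R be the map x⊗y ↦ −D(σ⁻¹(x))·y on the sub-bimodule generated by the elements δ_R(a). Then D = f_R ∘ δ_R. -/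
open TensorProduct MulOpposite

/-- Suppose `σ` is invertible, with inverse `σinv`.  For a `(σ,τ)`-derivation
`D : A → M` there is a right `A`-linear map `f_R` on `A ⊗[R] A`,
`x ⊗ y ↦ −D (σ⁻¹ x) • y`, whose restriction to the sub-bimodule generated by
the elements `δ_R a = 1 ⊗ τ a − σ a ⊗ 1` satisfies `D = f_R ∘ δ_R`. -/
theorem universal_property_sigma_invertible
    (R : Type*) [CommRing R] (A : Type*) [CommRing A] [Algebra R A]
    (M : Type*) [AddCommGroup M] [Module R M]
    [Module A M] [Module Aᵐᵒᵖ M] [SMulCommClass A Aᵐᵒᵖ M]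
    [IsScalarTower R A M] [IsScalarTower R Aᵐᵒᵖ M]
    (σ τ : A →ₐ[R] A) (σinv : A → A)
    (hinv₁ : Function.LeftInverse σinv ⇑σ)
    (hinv₂ : Function.RightInverse σinv ⇑σ)
    (D : A →ₗ[R] M)
    (hD : ∀ a b : A, D (a * b) = op (τ b) • D a + σ a • D b) :
    ∃ fR : A ⊗[R] A →ₗ[R] M,
      (∀ x y : A, fR (x ⊗ₜ[R] y) = -(op y • D (σinv x))) ∧
      (∀ a : A, fR (1 ⊗ₜ[R] τ a - σ a ⊗ₜ[R] 1) = D a) := by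
  have hinj : Function.Injective ⇑σ := hinv₁.injective
  have hadd : ∀ x x', σinv (x + x') = σinv x + σinv x' := fun x x' => by
    apply hinj; rw [hinv₂, map_add, hinv₂, hinv₂]
  have hsmul : ∀ (r : R) x, σinv (r • x) = r • σinv x := fun r x => by
    apply hinj; rw [hinv₂, map_smul, hinv₂]
  have hD1 : D 1 = 0 := by
    have h := hD 1 1
    simp only [mul_one, map_one, op_one, one_smul] at h
    nth_rewrite 1 [← add_zero (D 1)] at h
    exact (add_left_cancel h).symm
  have hone : σinv 1 = 1 := by have h := hinv₁ 1; rwa [map_one] at h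
  refine ⟨TensorProduct.lift (LinearMap.mk₂ R (fun x y => -(op y • D (σinv x)))
      (fun x x' y => ?_) (fun r x y => ?_) (fun x y y' => ?_) (fun r x y => ?_)),
      fun x y => by simp [TensorProduct.lift.tmul], fun a => ?_⟩
  · simp only [hadd, map_add, smul_add, neg_add]
  · simp only [hsmul, map_smul, smul_neg]; rw [smul_comm]
  · simp only [op_add, add_smul, neg_add]
  · simp only [op_smul, smul_assoc, smul_neg]
  · rw [map_sub]
    simp only [TensorProduct.lift.tmul, LinearMap.mk₂_apply]
    rw [hinv₁ a, hone]
    simp [hD1]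
end

section
/- Let d ≢ 1 mod 4 be square-free, σ = id and τ the conjugation a + b√d ↦ a − b√d on ℤ[√d]. Then every ℤ-linear map D : ℤ[√d] → ℤ[√d] with D(1) = 0 is a (σ,τ)-derivation, i.e., satisfies D(xy) = D(x)τ(y) + σ(x)D(y) for all x, y. -/
open Zsqrtd

/-- For square-free `d ≢ 1 (mod 4)`, with `σ = id` and `τ` the conjugation
(`star`) on `ℤ√d`, every `ℤ`-linear map `D : ℤ√d → ℤ√d` with `D 1 = 0` is a
`(σ,τ)`-derivation. -/
theorem zsqrtd_linear_map_is_derivation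
    (d : ℤ) (hsf : Squarefree d) (hd : d % 4 ≠ 1)
    (D : ℤ√d →ₗ[ℤ] ℤ√d) (h1 : D 1 = 0) :
    ∀ x y : ℤ√d, D (x * y) = D x * star y + x * D y := by
  have key : ∀ z : ℤ√d, D z = z.im • D (sqrtd : ℤ√d) := by
    intro z
    have hz : z = z.re • (1 : ℤ√d) + z.im • (sqrtd : ℤ√d) := by
      ext <;> simp [Zsqrtd.re_smul, Zsqrtd.im_smul]
    rw [hz, map_add, map_smul, map_smul, h1, smul_zero, zero_add]; simp
  intro x y
  rw [key (x * y), key x, key y]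
  ext <;>
    simp [Zsqrtd.re_mul, Zsqrtd.im_mul, Zsqrtd.re_smul, Zsqrtd.im_smul] <;>
    ring
end

section
/- Let d ≢ 1 mod 4 be square-free, σ = id, τ the conjugation on ℤ[√d], and D a ℤ-linear map with D(1) = 0 and D(√d) = α + β√d. If 2d divides α and 2 divides β, then D is (σ,τ)-inner: there exists w ∈ ℤ[√d] with D(x) = w·τ(x) − σ(x)·w for all x. Specifically w = −(β/2 + (α/(2d))√d) works up to sign convention: D(x) = (β/2 + (α/(2d))√d)·(σ(x) − τ(x)). -/
open Zsqrtd

/-- For square-free `d ≢ 1 (mod 4)`, `σ = id`, `τ = star` on `ℤ√d`: if a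
`ℤ`-linear map `D` with `D 1 = 0` has `D √d = α + β√d` with `2d ∣ α` and
`2 ∣ β`, then `D` is `(σ,τ)`-inner; specifically
`D x = (β/2 + (α/(2d))√d) * (σ x − τ x)`. -/
theorem zsqrtd_derivation_inner
    (d : ℤ) (hsf : Squarefree d) (hd : d % 4 ≠ 1)
    (D : ℤ√d →ₗ[ℤ] ℤ√d) (h1 : D 1 = 0)
    (α β : ℤ) (hval : D sqrtd = ⟨α, β⟩)
    (hα : 2 * d ∣ α) (hβ : 2 ∣ β) :
    (∃ w : ℤ√d, ∀ x : ℤ√d, D x = w * star x - x * w) ∧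
    (∀ x : ℤ√d, D x = (⟨β / 2, α / (2 * d)⟩ : ℤ√d) * (x - star x)) := by
  have hd0 : d ≠ 0 := hsf.ne_zero
  have hα' : 2 * d * (α / (2 * d)) = α := Int.mul_ediv_cancel' hα
  have hβ' : 2 * (β / 2) = β := Int.mul_ediv_cancel' hβ
  have key : ∀ x : ℤ√d, D x = (⟨β / 2, α / (2 * d)⟩ : ℤ√d) * (x - star x) := by
    intro x
    have hx : x = (x.re : ℤ) • (1 : ℤ√d) + (x.im : ℤ) • sqrtd := by
      ext <;> simp
    rw [hx, map_add, map_smul, map_smul, h1, hval]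
    ext
    · simp [Zsqrtd.smul_val, Zsqrtd.ext_iff, star]
      linear_combination (-x.im) * hα'
    · simp [Zsqrtd.smul_val, Zsqrtd.ext_iff, star]
      linear_combination (-x.im) * hβ'
  refine ⟨⟨-(⟨β / 2, α / (2 * d)⟩ : ℤ√d), fun x => ?_⟩, key⟩
  rw [key x]
  ring
end

section
/- Let d ≡ 1 mod 4 be square-free, d ≠ 1, ω = (1+√d)/2, σ = id and τ the conjugation a + bω ↦ a + b(1−ω) on ℤ[ω]. Then every ℤ-linear map D : ℤ[ω] → ℤ[ω] with D(1) = 0 satisfies D(xy) = D(x)τ(y) + σ(x)D(y) for all x, y, i.e., is a (σ,τ)-derivation. -/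
open Polynomial

/-- `ℤ[ω]` with `ω = (1+√d)/2`, realized as `AdjoinRoot (X² − X − (d−1)/4)`;
for square-free `d ≡ 1 (mod 4)` this is the ring of integers of `ℚ(√d)`. -/
noncomputable abbrev Zomega (d : ℤ) : Type :=
  AdjoinRoot ((X : ℤ[X]) ^ 2 - X - C ((d - 1) / 4))

/-- The element `ω = (1+√d)/2` of `ℤ[ω]`. -/
noncomputable abbrev omegaElt (d : ℤ) : Zomega d := AdjoinRoot.root _

/-- For square-free `d ≡ 1 (mod 4)`, `d ≠ 1`, with `σ = id` and `τ` the
conjugation `a + bω ↦ a + b(1−ω)` on `ℤ[ω]`: every `ℤ`-linear map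
`D : ℤ[ω] → ℤ[ω]` with `D 1 = 0` is a `(σ,τ)`-derivation. -/
theorem quadratic_omega_linear_map_is_derivation
    (d : ℤ) (hsf : Squarefree d) (hd : d % 4 = 1) (hd1 : d ≠ 1)
    (τ : Zomega d →+* Zomega d) (hτ : τ (omegaElt d) = 1 - omegaElt d)
    (D : Zomega d →ₗ[ℤ] Zomega d) (h1 : D 1 = 0) :
    ∀ x y : Zomega d, D (x * y) = D x * τ y + x * D y := by
  have hsq : omegaElt d * omegaElt d = omegaElt d + ((d - 1) / 4 : ℤ) := by
    have h0 : AdjoinRoot.mk ((X : ℤ[X]) ^ 2 - X - C ((d - 1) / 4))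
        ((X : ℤ[X]) ^ 2 - X - C ((d - 1) / 4)) = 0 := AdjoinRoot.mk_self
    simp only [map_sub, map_add, map_pow, map_intCast, AdjoinRoot.mk_X,
      AdjoinRoot.mk_C, sub_sub, sub_eq_zero, eq_intCast] at h0
    rw [← sq]
    rw [h0]
  set f : ℤ[X] := (X : ℤ[X]) ^ 2 - X - C ((d - 1) / 4) with hf
  have hmonic : f.Monic := by rw [hf]; monicity!
  have hdeg : f.degree = 2 := by rw [hf]; compute_degree!
  have hD : ∀ (a : ℤ) (w : Zomega d), D ((a : Zomega d) * w) = (a : Zomega d) * D w := by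
    intro a w
    rw [show (a : Zomega d) * w = a • w by simp [zsmul_eq_mul], map_smul, zsmul_eq_mul]
  have hDc : ∀ a : ℤ, D (a : Zomega d) = 0 := by
    intro a
    have := hD a 1
    simpa [h1] using this
  have rep : ∀ z : Zomega d, ∃ a b : ℤ,
      z = (a : Zomega d) + (b : Zomega d) * omegaElt d := by
    intro z
    induction z using AdjoinRoot.induction_on with
    | ih p =>
      refine ⟨(p %ₘ f).coeff 0, (p %ₘ f).coeff 1, ?_⟩
      have h1' : AdjoinRoot.mk f p = AdjoinRoot.mk f (p %ₘ f) := by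
        conv_lhs => rw [← Polynomial.modByMonic_add_div p f]
        rw [map_add, map_mul, AdjoinRoot.mk_self, zero_mul, add_zero]
      have h2 : (p %ₘ f).degree ≤ 1 := by
        have := Polynomial.degree_modByMonic_lt p hmonic
        rw [hdeg] at this
        exact Order.le_of_lt_succ (by exact_mod_cast this)
      rw [h1']
      conv_lhs => rw [Polynomial.eq_X_add_C_of_degree_le_one h2]
      simp only [map_add, map_mul, AdjoinRoot.mk_X, AdjoinRoot.mk_C, eq_intCast, map_intCast]
      ring
  intro x y
  obtain ⟨a, b, rfl⟩ := rep x
  obtain ⟨c, e, rfl⟩ := rep y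
  have key : ((a : Zomega d) + b * omegaElt d) * ((c : Zomega d) + e * omegaElt d)
      = ((a * c + b * e * ((d - 1) / 4) : ℤ) : Zomega d)
        + ((a * e + b * c + b * e : ℤ) : Zomega d) * omegaElt d := by
    push_cast
    linear_combination ((b : Zomega d) * e) * hsq
  have hx : D ((a : Zomega d) + b * omegaElt d) = (b : Zomega d) * D (omegaElt d) := by
    rw [map_add, hD, hDc, zero_add]
  have hy : D ((c : Zomega d) + e * omegaElt d) = (e : Zomega d) * D (omegaElt d) := by
    rw [map_add, hD, hDc, zero_add]
  have hτy : τ ((c : Zomega d) + e * omegaElt d)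
      = (c : Zomega d) + e * (1 - omegaElt d) := by
    rw [map_add, map_mul, map_intCast, map_intCast, hτ]
  rw [key, map_add, hD, hDc, zero_add, hx, hy, hτy]
  push_cast
  ring
end

section
/- Let d ≢ 1 mod 4 be square-free. With σ = id and τ the conjugation on ℤ[√d], the ℤ-module of (σ,τ)-derivations of ℤ[√d] is free of rank 2, isomorphic to ℤ[√d] via D ↦ D(√d). -/
open Zsqrtd

def zsqrtdL (d : ℤ) (w : ℤ√d) : ℤ√d →ₗ[ℤ] ℤ√d where
  toFun x := x.im • w
  map_add' x y := by simp [add_smul]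
  map_smul' c x := by simp [zsmul_eq_mul, Zsqrtd.im_smul, mul_smul]

@[simp] lemma zsqrtdL_apply (d : ℤ) (w x : ℤ√d) : zsqrtdL d w x = x.im • w := rfl

lemma zsqrtd_aux_eq (d : ℤ) (w x y : ℤ√d) :
    (((x * y).im : ℤ) : ℤ√d) * w
      = ((x.im : ℤ) : ℤ√d) * w * star y + x * (((y.im : ℤ) : ℤ√d) * w) := by
  ext <;> simp [Zsqrtd.re_mul, Zsqrtd.im_mul, Zsqrtd.re_star, Zsqrtd.im_star] <;> ring

lemma zsqrtd_finrank (d : ℤ) : Module.Free ℤ (ℤ√d) ∧ Module.finrank ℤ (ℤ√d) = 2 := by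
  let e : ℤ√d ≃ₗ[ℤ] ℤ × ℤ :=
    { toFun := fun x => (x.re, x.im)
      map_add' := fun x y => by simp
      map_smul' := fun c x => by
        simp [zsmul_eq_mul, Zsqrtd.re_smul, Zsqrtd.im_smul, Prod.smul_def]
      invFun := fun p => ⟨p.1, p.2⟩
      left_inv := fun x => by ext <;> rfl
      right_inv := fun p => rfl }
  constructor
  · exact Module.Free.of_equiv e.symm
  · rw [e.finrank_eq]
    simp [Module.finrank_prod]

/-- For square-free `d ≢ 1 (mod 4)`, with `σ = id` and `τ = star` on `ℤ√d`,
the `ℤ`-module of `(σ,τ)`-derivations of `ℤ√d` is free of rank 2, isomorphic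
to `ℤ√d` via `D ↦ D √d`. -/
theorem zsqrtd_derivations_free_rank_two
    (d : ℤ) (hsf : Squarefree d) (hd : d % 4 ≠ 1)
    (S : Submodule ℤ (ℤ√d →ₗ[ℤ] ℤ√d))
    (hS : ∀ D : ℤ√d →ₗ[ℤ] ℤ√d,
      D ∈ S ↔ ∀ x y : ℤ√d, D (x * y) = D x * star y + x * D y) :
    (∃ e : S ≃ₗ[ℤ] ℤ√d, ∀ D : S, e D = (D : ℤ√d →ₗ[ℤ] ℤ√d) sqrtd) ∧
    Module.Free ℤ S ∧ Module.finrank ℤ S = 2 := by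
  have hmemL : ∀ w : ℤ√d, zsqrtdL d w ∈ S := by
    intro w
    rw [hS]
    intro x y
    simpa [zsmul_eq_mul] using zsqrtd_aux_eq d w x y
  let g : ℤ√d →ₗ[ℤ] S :=
    { toFun := fun w => ⟨zsqrtdL d w, hmemL w⟩
      map_add' := fun w₁ w₂ => by
        apply Subtype.ext; apply LinearMap.ext; intro x
        simp [smul_add]
      map_smul' := fun c w => by
        apply Subtype.ext; apply LinearMap.ext; intro x
        simp [smul_comm]; ring }
  let f : S →ₗ[ℤ] ℤ√d :=
    { toFun := fun D => (D : ℤ√d →ₗ[ℤ] ℤ√d) sqrtd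
      map_add' := fun D E => by simp
      map_smul' := fun c D => by simp }
  have hD1 : ∀ D : S, (D : ℤ√d →ₗ[ℤ] ℤ√d) 1 = 0 := by
    intro D
    have h := ((hS D).1 D.2) 1 1
    simp at h
    exact h
  have hDx : ∀ (D : S) (x : ℤ√d),
      (D : ℤ√d →ₗ[ℤ] ℤ√d) x = x.im • (D : ℤ√d →ₗ[ℤ] ℤ√d) sqrtd := by
    intro D x
    have hx : x = x.re • (1 : ℤ√d) + x.im • sqrtd := by
      ext <;> simp [zsmul_eq_mul]
    conv_lhs => rw [hx]
    rw [map_add, map_smul, map_smul, hD1]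
    simp
  have hgf : g.comp f = LinearMap.id := by
    refine LinearMap.ext fun D => Subtype.ext (LinearMap.ext fun x => ?_)
    have := (hDx D x).symm
    simpa [f, g] using this
  have hfg : f.comp g = LinearMap.id := by
    refine LinearMap.ext fun w => ?_
    simp [f, g]
  let e : S ≃ₗ[ℤ] ℤ√d := LinearEquiv.ofLinear f g hfg hgf
  obtain ⟨hfree, hrk⟩ := zsqrtd_finrank d
  refine ⟨⟨e, fun D => rfl⟩, Module.Free.of_equiv e.symm, ?_⟩
  rw [e.finrank_eq, hrk]
end

section
/- Let d ≢ 1 mod 4 be square-free, σ the conjugation a + b√d ↦ a − b√d and τ = id on ℤ[√d]. Then every ℤ-linear map D : ℤ[√d] → ℤ[√d] with D(1) = 0 is a (σ,τ)-derivation. -/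
open Zsqrtd

lemma zsqrtd_decomp (d : ℤ) (z : ℤ√d) :
    z = z.re • (1 : ℤ√d) + z.im • (sqrtd : ℤ√d) := by
  ext <;> simp

/-- For square-free `d ≢ 1 (mod 4)`, with `σ` the conjugation (`star`) and
`τ = id` on `ℤ√d`, every `ℤ`-linear map `D : ℤ√d → ℤ√d` with `D 1 = 0` is a
`(σ,τ)`-derivation. -/
theorem zsqrtd_linear_map_is_derivation' 
    (d : ℤ) (hsf : Squarefree d) (hd : d % 4 ≠ 1)
    (D : ℤ√d →ₗ[ℤ] ℤ√d) (h1 : D 1 = 0) :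
    ∀ x y : ℤ√d, D (x * y) = D x * y + star x * D y := by
  have hD : ∀ z : ℤ√d, D z = (z.im : ℤ√d) * D sqrtd := by
    intro z
    calc D z = D (z.re • (1 : ℤ√d) + z.im • (sqrtd : ℤ√d)) := by
              rw [← zsqrtd_decomp]
      _ = z.re • D 1 + z.im • D sqrtd := by
              rw [map_add, map_smul, map_smul]
      _ = (z.im : ℤ√d) * D sqrtd := by
              rw [h1, smul_zero, zero_add, zsmul_eq_mul]
  intro x y
  rw [hD (x * y), hD x, hD y]
  have hstar : (star x : ℤ√d) = (x.re : ℤ√d) - (x.im : ℤ√d) * sqrtd := by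
    ext <;> simp
  have hx : (x : ℤ√d) = (x.re : ℤ√d) + (x.im : ℤ√d) * sqrtd := by
    ext <;> simp
  have hy : (y : ℤ√d) = (y.re : ℤ√d) + (y.im : ℤ√d) * sqrtd := by
    ext <;> simp
  have him : (((x * y).im : ℤ) : ℤ√d) = (x.re : ℤ√d) * y.im + (x.im : ℤ√d) * y.re := by
    rw [Zsqrtd.im_mul]; push_cast; ring
  rw [him, hstar]
  conv_rhs => rw [hy]
  simp
  ring
end

section
/- Let d ≡ 1 mod 4 be square-free, d ≠ 1, ω = (1+√d)/2. With σ = id and τ the conjugation on ℤ[ω], every (σ,τ)-derivation D satisfies D(a + bω) = b·D(ω), so the ℤ-module of (σ,τ)-derivations of ℤ[ω] is isomorphic to ℤ[ω] via D ↦ D(ω). -/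
open Polynomial

lemma fmonic (d : ℤ) : ((X : ℤ[X]) ^ 2 - X - C ((d - 1) / 4)).Monic := by
  monicity!

lemma fdeg (d : ℤ) : ((X : ℤ[X]) ^ 2 - X - C ((d - 1) / 4)).natDegree = 2 := by
  compute_degree!

lemma omega_sq (d : ℤ) :
    omegaElt d * omegaElt d = omegaElt d + (((d - 1) / 4 : ℤ) : Zomega d) := by
  have h := AdjoinRoot.mk_self (f := (X : ℤ[X]) ^ 2 - X - C ((d - 1) / 4))
  simp only [map_sub, map_pow, AdjoinRoot.mk_X, AdjoinRoot.mk_C] at h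
  have h2 : (omegaElt d) ^ 2 - omegaElt d - (((d - 1) / 4 : ℤ) : Zomega d) = 0 := by
    simpa [AdjoinRoot.algebraMap_eq, map_intCast] using h
  linear_combination h2

lemma exists_rep (d : ℤ) (x : Zomega d) :
    ∃ a b : ℤ, x = a • (1 : Zomega d) + b • omegaElt d := by
  obtain ⟨p, rfl⟩ := AdjoinRoot.mk_surjective x
  set f : ℤ[X] := (X : ℤ[X]) ^ 2 - X - C ((d - 1) / 4) with hf
  have hm : f.Monic := fmonic d
  have hmk : AdjoinRoot.mk f p = AdjoinRoot.mk f (p %ₘ f) := by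
    conv_lhs => rw [← modByMonic_add_div p f]
    rw [map_add, map_mul, AdjoinRoot.mk_self, zero_mul, add_zero]
  have hdeg : (p %ₘ f).degree ≤ 1 := by
    have h2 : f.degree = 2 := by
      rw [degree_eq_natDegree hm.ne_zero, fdeg]; rfl
    have := degree_modByMonic_lt p hm
    rw [h2] at this
    exact Order.le_of_lt_succ (by exact_mod_cast this)
  have hr := eq_X_add_C_of_degree_le_one hdeg
  refine ⟨(p %ₘ f).coeff 0, (p %ₘ f).coeff 1, ?_⟩
  set a := (p %ₘ f).coeff 0
  set b := (p %ₘ f).coeff 1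
  conv_lhs => rw [hmk, hr]
  simp only [map_add, map_mul, AdjoinRoot.mk_C, AdjoinRoot.mk_X, zsmul_eq_mul,
    eq_intCast]
  show (b : Zomega d) * omegaElt d + (a : Zomega d) = _
  ring

lemma exists_D (d : ℤ) (z : Zomega d) :
    ∃ D : Zomega d →ₗ[ℤ] Zomega d, D 1 = 0 ∧ D (omegaElt d) = z := by
  set pb : PowerBasis ℤ (Zomega d) := AdjoinRoot.powerBasis' (fmonic d) with hpb
  have hdim : pb.dim = 2 := by
    rw [hpb, AdjoinRoot.powerBasis'_dim, fdeg]
  refine ⟨pb.basis.constr ℤ (fun i => if (i : ℕ) = 1 then z else 0), ?_, ?_⟩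
  · have h1 : (1 : Zomega d) = pb.basis ⟨0, by omega⟩ := by
      rw [pb.basis_eq_pow]; simp
    rw [h1, Module.Basis.constr_basis]; simp
  · have h2 : omegaElt d = pb.basis ⟨1, by omega⟩ := by
      rw [pb.basis_eq_pow]
      simp [hpb, AdjoinRoot.powerBasis'_gen]
    rw [h2, Module.Basis.constr_basis]; simp

/-- For square-free `d ≡ 1 (mod 4)`, `d ≠ 1`, with `σ = id` and `τ` the
conjugation `ω ↦ 1 − ω` on `ℤ[ω]`: every `(σ,τ)`-derivation `D` satisfies
`D (a + bω) = b • D ω`, so the `ℤ`-module of `(σ,τ)`-derivations of `ℤ[ω]`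
is isomorphic to `ℤ[ω]` via `D ↦ D ω`. -/
theorem quadratic_omega_derivations_iso
    (d : ℤ) (hsf : Squarefree d) (hd : d % 4 = 1) (hd1 : d ≠ 1)
    (τ : Zomega d →+* Zomega d) (hτ : τ (omegaElt d) = 1 - omegaElt d)
    (S : Submodule ℤ (Zomega d →ₗ[ℤ] Zomega d))
    (hS : ∀ D : Zomega d →ₗ[ℤ] Zomega d,
      D ∈ S ↔ ∀ x y : Zomega d, D (x * y) = D x * τ y + x * D y) :
    (∀ D ∈ S, ∀ a b : ℤ,
      D (a • (1 : Zomega d) + b • omegaElt d) = b • D (omegaElt d)) ∧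
    ∃ e : S ≃ₗ[ℤ] Zomega d,
      ∀ D : S, e D = (D : Zomega d →ₗ[ℤ] Zomega d) (omegaElt d) := by
  -- every derivation kills 1
  have hone : ∀ D ∈ S, D (1 : Zomega d) = 0 := by
    intro D hD
    have h := ((hS D).1 hD) 1 1
    simp only [mul_one, one_mul, map_one] at h
    linear_combination -h
  have hform : ∀ D ∈ S, ∀ a b : ℤ,
      D (a • (1 : Zomega d) + b • omegaElt d) = b • D (omegaElt d) := by
    intro D hD a b
    rw [map_add, map_zsmul, map_zsmul, hone D hD, smul_zero, zero_add]
  refine ⟨hform, ?_⟩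
  -- evaluation at ω as a linear map on S
  let E : S →ₗ[ℤ] Zomega d :=
    { toFun := fun D => (D : Zomega d →ₗ[ℤ] Zomega d) (omegaElt d)
      map_add' := fun _ _ => rfl
      map_smul' := fun _ _ => rfl }
  have hinj : Function.Injective E := by
    intro D₁ D₂ h
    ext x
    obtain ⟨a, b, rfl⟩ := exists_rep d x
    rw [hform _ D₁.2, hform _ D₂.2]
    exact congrArg (b • ·) h
  have hsurj : Function.Surjective E := by
    intro z
    obtain ⟨D, hD1, hDω⟩ := exists_D d z
    have hkey : ∀ a b : ℤ, D (a • (1 : Zomega d) + b • omegaElt d) = b • z := by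
      intro a b
      rw [map_add, map_zsmul, map_zsmul, hD1, smul_zero, zero_add, hDω]
    have hmem : D ∈ S := by
      rw [hS]
      intro x y
      obtain ⟨a, b, rfl⟩ := exists_rep d x
      obtain ⟨c, e, rfl⟩ := exists_rep d y
      set ω := omegaElt d
      have hτy : τ (c • (1 : Zomega d) + e • ω) = c • (1 : Zomega d) + e • (1 - ω) := by
        rw [map_add, map_zsmul, map_zsmul, map_one, hτ]
      have hsq := omega_sq d
      have hmul : (a • (1 : Zomega d) + b • ω) * (c • (1 : Zomega d) + e • ω) =
          (a * c + b * e * ((d - 1) / 4)) • (1 : Zomega d) + (a * e + b * c + b * e) • ω := by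
        simp only [zsmul_eq_mul, Int.cast_mul, Int.cast_add, mul_one]
        linear_combination ((b : Zomega d) * (e : Zomega d)) * hsq
      rw [hmul, hkey, hkey, hkey, hτy]
      simp only [zsmul_eq_mul, Int.cast_add, Int.cast_mul, mul_one]
      ring
    exact ⟨⟨D, hmem⟩, hDω⟩
  refine ⟨LinearEquiv.ofBijective E ⟨hinj, hsurj⟩, fun D => rfl⟩
end
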